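/- Fix n ≥ 0 and k ≥ 1, and set p := 2n+1. On pairs (ν, C) ∈ ℤ^p × (ℤ/kℤ)^p define the maps: π(ν,C) := ((ν_1, ν_2, …, ν_{p−1}, ν_0 + 1), (C_1, …, C_{p−1}, C_0)); for 0 ≤ i ≤ 2n−1, s_i(ν,C) := the pair obtained by swapping entries in positions i and i+1 in both ν and C; and s_{2n}(ν,C) := ((ν_{2n} − 1, ν_1, …, ν_{2n−1}, ν_0 + 1), C with entries in positions 0 and 2n swapped). Then for each i = 0,…,2n, the composition E_i := s_i ∘ s_{i+1} ∘ ⋯ ∘ s_{i+2n−1} ∘ π (subscripts of the s's taken mod 2n+1) satisfies E_i(ν,C) = (ν + e_i, C) for all (ν,C), where e_i ∈ ℤ^p is the i-th standard unit vector. -/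

import Mathlib

/-- The rotation generator `π` of the extended affine Weyl group acting on `k`-coloured
integer sequences of length `p = 2n+1`:
`π(ν,C) = ((ν_1, …, ν_{p−1}, ν_0 + 1), (C_1, …, C_{p−1}, C_0))`. -/
def piMap (n k : ℕ) :
    (Fin (2 * n + 1) → ℤ) × (Fin (2 * n + 1) → ZMod k) →
      (Fin (2 * n + 1) → ℤ) × (Fin (2 * n + 1) → ZMod k) :=
  fun x =>
    (fun j => x.1 (j + 1) + if j = Fin.last (2 * n) then 1 else 0,
     fun j => x.2 (j + 1))

/-- The reflection generators `s_i`: for `0 ≤ i ≤ 2n−1`, `s_i` swaps the entries in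
positions `i` and `i+1` in both `ν` and `C`; the affine reflection `s_{2n}` sends
`(ν,C)` to `((ν_{2n} − 1, ν_1, …, ν_{2n−1}, ν_0 + 1), C` with positions `0` and `2n`
swapped`)`. -/
def sMap (n k : ℕ) (i : Fin (2 * n + 1)) :
    (Fin (2 * n + 1) → ℤ) × (Fin (2 * n + 1) → ZMod k) →
      (Fin (2 * n + 1) → ℤ) × (Fin (2 * n + 1) → ZMod k) :=
  fun x =>
    if (i : ℕ) = 2 * n then
      (fun j =>
        if j = (0 : Fin (2 * n + 1)) then x.1 (Fin.last (2 * n)) - 1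
        else if j = Fin.last (2 * n) then x.1 0 + 1
        else x.1 j,
       fun j => x.2 (Equiv.swap (0 : Fin (2 * n + 1)) (Fin.last (2 * n)) j))
    else
      (fun j => x.1 (Equiv.swap i (i + 1) j),
       fun j => x.2 (Equiv.swap i (i + 1) j))

/-- The translation operators `E_i := s_i ∘ s_{i+1} ∘ ⋯ ∘ s_{i+2n−1} ∘ π`
(subscripts mod `2n+1`). -/
def EMap (n k : ℕ) (i : Fin (2 * n + 1)) :
    (Fin (2 * n + 1) → ℤ) × (Fin (2 * n + 1) → ZMod k) →
      (Fin (2 * n + 1) → ℤ) × (Fin (2 * n + 1) → ZMod k) :=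
  (List.range (2 * n)).foldr
    (fun t acc => sMap n k (i + Fin.ofNat (2 * n + 1) t) ∘ acc) (piMap n k)

set_option maxHeartbeats 1600000

namespace EMapProof

open Fin.NatCast

lemma mod_small (x p : ℕ) (h0 : 0 < p) (h : x < 2*p) :
    x % p = if x < p then x else x - p := by
  split_ifs with h1
  · exact Nat.mod_eq_of_lt h1
  · rw [Nat.mod_eq_sub_mod (by omega), Nat.mod_eq_of_lt (by omega)]

lemma val_sub (n : ℕ) (j i : Fin (2*n+1)) :
    ((j - i : Fin (2*n+1)) : ℕ) =
      if (i:ℕ) ≤ (j:ℕ) then (j:ℕ) - (i:ℕ) else (j:ℕ) + (2*n+1) - (i:ℕ) := by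
  have hj := j.isLt; have hi := i.isLt
  rw [Fin.sub_def]
  show (2*n+1 - (i:ℕ) + (j:ℕ)) % (2*n+1) = _
  rw [mod_small _ _ (by omega) (by omega)]
  split_ifs <;> omega

lemma val_add_one (n : ℕ) (j : Fin (2*n+1)) :
    ((j + 1 : Fin (2*n+1)) : ℕ) = if (j:ℕ) < 2*n then (j:ℕ)+1 else 0 := by
  have hj := j.isLt
  rw [Fin.val_add, Fin.val_one']
  rcases Nat.lt_or_ge 1 (2*n+1) with h1 | h1
  · rw [Nat.mod_eq_of_lt h1, mod_small _ _ (by omega) (by omega)]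
    split_ifs <;> omega
  · have hn : n = 0 := by omega
    subst hn
    have : (j:ℕ) = 0 := by omega
    rw [if_neg (by omega)]
    simp_all

lemma val_add_natCast (n m : ℕ) (hm : m ≤ 2*n) (i : Fin (2*n+1)) :
    ((i + (m : Fin (2*n+1)) : Fin (2*n+1)) : ℕ) =
      if (i:ℕ) + m < 2*n+1 then (i:ℕ) + m else (i:ℕ) + m - (2*n+1) := by
  have hi := i.isLt
  rw [Fin.val_add, Fin.val_cast_of_lt (by omega), mod_small _ _ (by omega) (by omega)]

def sig (n : ℕ) (i : Fin (2*n+1)) (m : ℕ) (j : Fin (2*n+1)) : Fin (2*n+1) :=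
  if ((j - i : Fin (2*n+1)) : ℕ) < m then j + 1
  else if ((j - i : Fin (2*n+1)) : ℕ) = m then i else j

def del (n : ℕ) (i : Fin (2*n+1)) (m : ℕ) (j : Fin (2*n+1)) : ℤ :=
  if (i : ℕ) + m ≤ 2*n then (if j = i + (m : Fin (2*n+1)) then 1 else 0)
  else (if j = Fin.last (2*n) then 1 else 0)

lemma sig_top (n : ℕ) (i j : Fin (2*n+1)) : sig n i (2*n) j = j + 1 := by
  have hj := j.isLt; have hi := i.isLt
  simp only [sig, ne_eq, Fin.ext_iff, apply_ite (Fin.val (n := 2*n+1)), val_sub, val_add_one]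
  split_ifs <;> omega

lemma del_top (n : ℕ) (i j : Fin (2*n+1)) :
    del n i (2*n) j = if j = Fin.last (2*n) then 1 else 0 := by
  have hj := j.isLt; have hi := i.isLt
  simp only [del, ne_eq, Fin.ext_iff, val_add_natCast n (2*n) le_rfl, Fin.val_last]
  split_ifs <;> omega

lemma sig_zero (n : ℕ) (i j : Fin (2*n+1)) : sig n i 0 j = j := by
  have hj := j.isLt; have hi := i.isLt
  simp only [sig, ne_eq, Fin.ext_iff, apply_ite (Fin.val (n := 2*n+1)), val_sub, val_add_one]
  split_ifs <;> omega

lemma del_zero (n : ℕ) (i j : Fin (2*n+1)) :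
    del n i 0 j = if j = i then 1 else 0 := by
  have hi := i.isLt
  simp only [del, Nat.cast_zero, add_zero]
  rw [if_pos (show (i:ℕ) ≤ 2*n by omega)]

lemma sig_step (n : ℕ) (i : Fin (2*n+1)) (m : ℕ) (hm : m < 2*n) (j : Fin (2*n+1)) :
    sig n i (m+1) (Equiv.swap (i + (m : Fin (2*n+1))) (i + (m : Fin (2*n+1)) + 1) j)
      = sig n i m j := by
  have hj := j.isLt; have hi := i.isLt
  rcases eq_or_ne j (i + (m : Fin (2*n+1))) with rfl | hj1
  · rw [Equiv.swap_apply_left]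
    simp only [sig, ne_eq, Fin.ext_iff, apply_ite (Fin.val (n := 2*n+1)), val_sub, val_add_one,
      val_add_natCast n m (by omega)]
    split_ifs <;> omega
  rcases eq_or_ne j (i + (m : Fin (2*n+1)) + 1) with rfl | hj2
  · rw [Equiv.swap_apply_right]
    simp only [sig, ne_eq, Fin.ext_iff, apply_ite (Fin.val (n := 2*n+1)), val_sub, val_add_one,
      val_add_natCast n m (by omega)]
    split_ifs <;> omega
  · rw [Equiv.swap_apply_of_ne_of_ne hj1 hj2]
    simp only [sig, ne_eq, Fin.ext_iff, apply_ite (Fin.val (n := 2*n+1)), val_sub, val_add_one,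
      val_add_natCast n m (by omega)] at hj1 hj2 ⊢
    split_ifs at hj1 hj2 ⊢ <;> omega

lemma del_step (n : ℕ) (i : Fin (2*n+1)) (m : ℕ) (hm : m < 2*n)
    (hB : (i:ℕ) + m ≠ 2*n) (j : Fin (2*n+1)) :
    del n i (m+1) (Equiv.swap (i + (m : Fin (2*n+1))) (i + (m : Fin (2*n+1)) + 1) j)
      = del n i m j := by
  have hj := j.isLt; have hi := i.isLt
  rcases eq_or_ne j (i + (m : Fin (2*n+1))) with rfl | hj1
  · rw [Equiv.swap_apply_left]
    simp only [del, ne_eq, Fin.ext_iff, val_add_one, Fin.val_last,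
      val_add_natCast n m (by omega), val_add_natCast n (m+1) (by omega)]
    split_ifs <;> omega
  rcases eq_or_ne j (i + (m : Fin (2*n+1)) + 1) with rfl | hj2
  · rw [Equiv.swap_apply_right]
    simp only [del, ne_eq, Fin.ext_iff, val_add_one, Fin.val_last,
      val_add_natCast n m (by omega), val_add_natCast n (m+1) (by omega)]
    split_ifs <;> omega
  · rw [Equiv.swap_apply_of_ne_of_ne hj1 hj2]
    simp only [del, ne_eq, Fin.ext_iff, val_add_one, Fin.val_last,
      val_add_natCast n m (by omega), val_add_natCast n (m+1) (by omega)] at hj1 hj2 ⊢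
    split_ifs at hj1 hj2 ⊢ <;> omega

lemma step (n k : ℕ) (i : Fin (2*n+1)) (m : ℕ) (hm : m < 2*n)
    (ν : Fin (2*n+1) → ℤ) (C : Fin (2*n+1) → ZMod k) :
    sMap n k (i + (m : Fin (2*n+1)))
      (fun j => ν (sig n i (m+1) j) + del n i (m+1) j, fun j => C (sig n i (m+1) j))
      = (fun j => ν (sig n i m j) + del n i m j, fun j => C (sig n i m j)) := by
  have hi := i.isLt
  by_cases ha : ((i + (m : Fin (2*n+1)) : Fin (2*n+1)) : ℕ) = 2*n
  · have hA : (i:ℕ) + m = 2*n := by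
      rw [val_add_natCast n m (by omega)] at ha; split_ifs at ha <;> omega
    have hal : i + (m : Fin (2*n+1)) = Fin.last (2*n) := by
      apply Fin.ext; rw [Fin.val_last]; exact ha
    have hal1 : i + (m : Fin (2*n+1)) + 1 = 0 := by
      apply Fin.ext; rw [val_add_one, ha]; simp
    simp only [sMap]
    rw [if_pos ha]
    refine Prod.ext ?_ ?_
    · funext j
      dsimp only
      by_cases h0 : j = (0 : Fin (2*n+1))
      · subst h0
        rw [if_pos rfl]
        have e1 : sig n i (m+1) (Fin.last (2*n)) = 0 := by
          simp only [sig, Fin.ext_iff, apply_ite (Fin.val (n := 2*n+1)), val_sub,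
            val_add_one, Fin.val_last, Fin.val_zero]
          split_ifs <;> omega
        have e2 : sig n i m 0 = 0 := by
          have h00 : ((0 : Fin (2*n+1)) : ℕ) = 0 := rfl
          simp only [sig, Fin.ext_iff, apply_ite (Fin.val (n := 2*n+1)), val_sub,
            val_add_one, Fin.val_last]
          split_ifs <;> omega
        have d1 : del n i (m+1) (Fin.last (2*n)) = 1 := by
          simp only [del, Fin.ext_iff, val_add_natCast n (m+1) (by omega),
            val_add_natCast n m (by omega), Fin.val_last, Fin.val_zero]
          split_ifs <;> omega
        have d2 : del n i m 0 = 0 := by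
          simp only [del, Fin.ext_iff, val_add_natCast n (m+1) (by omega),
            val_add_natCast n m (by omega), Fin.val_last, Fin.val_zero]
          split_ifs <;> omega
        rw [e1, e2, d1, d2]; ring
      by_cases hl : j = Fin.last (2*n)
      · subst hl
        rw [if_neg h0, if_pos rfl]
        have e3 : sig n i (m+1) 0 = i := by
          have h00 : ((0 : Fin (2*n+1)) : ℕ) = 0 := rfl
          simp only [sig, Fin.ext_iff, apply_ite (Fin.val (n := 2*n+1)), val_sub,
            val_add_one, Fin.val_last]
          split_ifs <;> omega
        have e4 : sig n i m (Fin.last (2*n)) = i := by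
          simp only [sig, Fin.ext_iff, apply_ite (Fin.val (n := 2*n+1)), val_sub,
            val_add_one, Fin.val_last, Fin.val_zero]
          split_ifs <;> omega
        have d3 : del n i (m+1) 0 = 0 := by
          simp only [del, Fin.ext_iff, val_add_natCast n (m+1) (by omega),
            val_add_natCast n m (by omega), Fin.val_last, Fin.val_zero]
          split_ifs <;> omega
        have d4 : del n i m (Fin.last (2*n)) = 1 := by
          simp only [del, Fin.ext_iff, val_add_natCast n (m+1) (by omega),
            val_add_natCast n m (by omega), Fin.val_last, Fin.val_zero]
          split_ifs <;> omega
        rw [e3, e4, d3, d4]; ring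
      · rw [if_neg h0, if_neg hl]
        simp only [ne_eq, Fin.ext_iff, Fin.val_zero, Fin.val_last] at h0 hl
        have e5 : sig n i (m+1) j = sig n i m j := by
          simp only [sig, Fin.ext_iff, apply_ite (Fin.val (n := 2*n+1)), val_sub,
            val_add_one]
          split_ifs <;> omega
        have d5 : del n i (m+1) j = del n i m j := by
          simp only [del, Fin.ext_iff, val_add_natCast n (m+1) (by omega),
            val_add_natCast n m (by omega), Fin.val_last]
          split_ifs <;> omega
        rw [e5, d5]
    · funext j
      dsimp only
      have hsw : Equiv.swap (0 : Fin (2*n+1)) (Fin.last (2*n))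
          = Equiv.swap (i + (m : Fin (2*n+1))) (i + (m : Fin (2*n+1)) + 1) := by
        rw [hal1, hal, Equiv.swap_comm]
      rw [hsw, sig_step n i m hm]
  · have hB : (i:ℕ) + m ≠ 2*n := by
      intro h; apply ha; rw [val_add_natCast n m (by omega)]; split_ifs <;> omega
    simp only [sMap]
    rw [if_neg ha]
    refine Prod.ext ?_ ?_ <;> funext j <;> dsimp only
    · rw [sig_step n i m hm j, del_step n i m hm hB j]
    · rw [sig_step n i m hm j]

lemma fold (n k : ℕ) (i : Fin (2*n+1)) (d m : ℕ) (h : m + d = 2*n)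
    (ν : Fin (2*n+1) → ℤ) (C : Fin (2*n+1) → ZMod k) :
    (List.range' m d).foldr
      (fun t acc => sMap n k (i + ((t : ℕ) : Fin (2*n+1))) ∘ acc) (piMap n k) (ν, C)
      = (fun j => ν (sig n i m j) + del n i m j, fun j => C (sig n i m j)) := by
  induction d generalizing m with
  | zero =>
    have hm : m = 2*n := by omega
    subst hm
    simp only [List.range', List.foldr_nil, piMap]
    refine Prod.ext ?_ ?_ <;> funext j <;> dsimp only
    · rw [sig_top, del_top]
    · rw [sig_top]
  | succ d ih =>
    rw [List.range'_succ, List.foldr_cons, Function.comp_apply, ih (m+1) (by omega)]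
    exact step n k i m (by omega) ν C


end EMapProof

/-- For each `i = 0, …, 2n`, the composition
`E_i = s_i ∘ s_{i+1} ∘ ⋯ ∘ s_{i+2n−1} ∘ π` acts on coloured sequences by
`E_i(ν,C) = (ν + e_i, C)`, where `e_i` is the `i`-th standard unit vector. -/
theorem EMap_eq_translation (n k : ℕ) :
    ∀ (i : Fin (2 * n + 1)) (ν : Fin (2 * n + 1) → ℤ) (C : Fin (2 * n + 1) → ZMod k),
      EMap n k i (ν, C) = (fun j => ν j + if j = i then 1 else 0, C) := by
  intro i ν C
  have h1 : EMap n k i (ν, C)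
      = (fun j => ν (EMapProof.sig n i 0 j) + EMapProof.del n i 0 j,
         fun j => C (EMapProof.sig n i 0 j)) := by
    unfold EMap
    rw [List.range_eq_range']
    exact EMapProof.fold n k i (2*n) 0 (by omega) ν C
  rw [h1]
  refine Prod.ext ?_ ?_ <;> funext j <;> dsimp only
  · rw [EMapProof.sig_zero, EMapProof.del_zero]
  · rw [EMapProof.sig_zero]
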